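/- Let f = Σₖ fₖ xᵏ be a formal power series over Q with f₀ = 1 and fₖ ≠ 0 for all k, and let F = Σᵢ Fᵢ be the associated multiplicative sequence. Let m ≥ 3 and suppose a symmetric homogeneous polynomial h of degree d in variables x₁,...,xₘ satisfies h(x₁,...,xₘ) = Σᵢ₌₀^d aᵢ xₘ^i F_{d−i}(x₁,...,x_{m−1}) for some rational coefficients aᵢ. Then h = a₀ F_d(x₁,...,xₘ). -/
import Mathlib


open MvPolynomial

/-- Lemma on multiplicative sequences: if `f = Σ fₖxᵏ` has `f₀ = 1` and all `fₖ ≠ 0`,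
`F` is the associated multiplicative sequence (characterized by `Fᵢ = fᵢxⁱ` in one
variable and the factorization `F(x₁,…,x_{m}) = f(xₘ)·F(x₁,…,x_{m−1})`), `m = n+1 ≥ 3`,
and a symmetric homogeneous polynomial `h` of degree `d` in `m` variables satisfies
`h = Σᵢ aᵢ xₘⁱ F_{d−i}(x₁,…,x_{m−1})`, then `h = a₀ F_d(x₁,…,xₘ)`. -/
theorem stmt_2 (f : ℕ → ℚ) (hf0 : f 0 = 1) (hf : ∀ k, f k ≠ 0)
    (F : (n : ℕ) → ℕ → MvPolynomial (Fin n) ℚ)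
    (hFone : ∀ i, F 1 i = C (f i) * X 0 ^ i)
    (hFsym : ∀ (n i : ℕ) (σ : Equiv.Perm (Fin n)), rename σ (F n i) = F n i)
    (hFhom : ∀ n i, (F n i).IsHomogeneous i)
    (hFrec : ∀ n d, F (n + 1) d =
      ∑ j ∈ Finset.range (d + 1),
        C (f j) * X (Fin.last n) ^ j * rename Fin.castSucc (F n (d - j)))
    (n : ℕ) (hn : 2 ≤ n) (d : ℕ)
    (h : MvPolynomial (Fin (n + 1)) ℚ)
    (hsym : ∀ σ : Equiv.Perm (Fin (n + 1)), rename σ h = h)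
    (hhom : h.IsHomogeneous d)
    (a : ℕ → ℚ)
    (hh : h = ∑ i ∈ Finset.range (d + 1),
      C (a i) * X (Fin.last n) ^ i * rename Fin.castSucc (F n (d - i))) :
    h = C (a 0) * F (n + 1) d := by
  -- rename coefficient vanishing helper
  have hren0 : ∀ (N : ℕ) (p : MvPolynomial (Fin N) ℚ) (μ : Fin (N+1) →₀ ℕ),
      μ (Fin.last N) ≠ 0 → coeff μ (rename Fin.castSucc p) = 0 := by
    intro N p μ hμ
    by_contra hc
    obtain ⟨u, hu, -⟩ := coeff_rename_ne_zero _ _ _ hc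
    apply hμ
    rw [← hu]
    apply Finsupp.mapDomain_notin_range
    simp [Set.range, Fin.exists_iff, Fin.ext_iff]
  -- coefficient of rename at an image monomial
  have hrenim : ∀ (N : ℕ) (p : MvPolynomial (Fin N) ℚ) (u : Fin N →₀ ℕ),
      coeff (Finsupp.mapDomain Fin.castSucc u) (rename Fin.castSucc p) = coeff u p :=
    fun N p u => coeff_rename_mapDomain _ (Fin.castSucc_injective N) p u
  -- term computation
  have hterm : ∀ (N : ℕ) (c : ℚ) (j : ℕ) (p : MvPolynomial (Fin N) ℚ) (μ : Fin (N+1) →₀ ℕ),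
      coeff μ (C c * X (Fin.last N) ^ j * rename Fin.castSucc p) =
      if j = μ (Fin.last N) then
        c * coeff (μ - Finsupp.single (Fin.last N) j) (rename Fin.castSucc p) else 0 := by
    intro N c j p μ
    rw [X_pow_eq_monomial, C_mul_monomial, mul_one, coeff_monomial_mul']
    rcases eq_or_ne j (μ (Fin.last N)) with hj | hj
    · rw [if_pos hj, if_pos (Finsupp.single_le_iff.2 hj.le)]
    · rw [if_neg hj]
      rcases le_or_gt j (μ (Fin.last N)) with hle | hlt
      · rw [if_pos (Finsupp.single_le_iff.2 hle)]
        rw [hren0 N p _ (by simp [Finsupp.tsub_apply]; omega)]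
        ring
      · rw [if_neg (by simpa [Finsupp.single_le_iff] using hlt.not_ge)]
  -- F _ 0 = 1
  have hF0 : ∀ N, F (N + 1) 0 = 1 := by
    intro N
    induction N with
    | zero => rw [hFone, hf0]; simp
    | succ N ih => rw [hFrec]; simp [ih, hf0]
  -- coefficient of X_last ^ k in F (N+1) k is f k
  have hlastc : ∀ N k, coeff (Finsupp.single (Fin.last N) k) (F (N + 1) k) = f k := by
    intro N k
    induction N with
    | zero =>
      rw [hFone, X_pow_eq_monomial, C_mul_monomial, mul_one]
      have : (Fin.last 0) = (0 : Fin 1) := by simp [Fin.ext_iff]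
      rw [this, coeff_monomial, if_pos rfl]
    | succ N ih =>
      rw [hFrec, coeff_sum]
      have hx : ∀ j ∈ Finset.range (k + 1),
          coeff (Finsupp.single (Fin.last (N+1)) k)
            (C (f j) * X (Fin.last (N+1)) ^ j * rename Fin.castSucc (F (N+1) (k - j))) =
          if j = k then f k else 0 := by
        intro j hj
        rw [hterm]
        rw [Finsupp.single_apply, if_pos rfl]
        rcases eq_or_ne j k with rfl | hjk
        · rw [if_pos rfl, if_pos rfl]
          have h1 : (Finsupp.single (Fin.last (N+1)) j - Finsupp.single (Fin.last (N+1)) j)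
              = (0 : Fin (N+2) →₀ ℕ) := by simp
          rw [h1]
          have h2 : (0 : Fin (N+2) →₀ ℕ) = Finsupp.mapDomain Fin.castSucc 0 := by simp
          rw [h2, hrenim, Nat.sub_self, hF0]
          simp
        · rw [if_neg hjk, if_neg hjk]
      rw [Finset.sum_congr rfl hx, Finset.sum_ite_eq' (Finset.range (k+1)) k fun _ => f k]
      simp
  -- coefficient of X_v ^ k in F (N+1) k is f k, any v
  have hanyc : ∀ N (v : Fin (N+1)) k, coeff (Finsupp.single v k) (F (N + 1) k) = f k := by
    intro N v k
    have hσ : Finsupp.single v k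
        = Finsupp.mapDomain (Equiv.swap v (Fin.last N)) (Finsupp.single (Fin.last N) k) := by
      rw [Finsupp.mapDomain_single, Equiv.swap_apply_right]
    rw [← hFsym (N+1) k (Equiv.swap v (Fin.last N)), hσ,
      coeff_rename_mapDomain _ (Equiv.injective _), hlastc]
  -- mixed coefficient
  have hmix : ∀ N (A B : ℕ),
      coeff (Finsupp.single 0 A + Finsupp.single (Fin.last (N+1)) B) (F (N+2) (A+B))
        = f A * f B := by
    intro N A B
    have h0L : (0 : Fin (N+2)) ≠ Fin.last (N+1) := by simp [Fin.ext_iff]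
    have hμL : (Finsupp.single (0 : Fin (N+2)) A + Finsupp.single (Fin.last (N+1)) B)
        (Fin.last (N+1)) = B := by
      simp [Finsupp.single_apply, h0L]
    rw [hFrec, coeff_sum]
    have hx : ∀ j ∈ Finset.range (A + B + 1),
        coeff (Finsupp.single (0 : Fin (N+2)) A + Finsupp.single (Fin.last (N+1)) B)
          (C (f j) * X (Fin.last (N+1)) ^ j * rename Fin.castSucc (F (N+1) (A + B - j))) =
        if j = B then f A * f B else 0 := by
      intro j hj
      rw [hterm, hμL]
      rcases eq_or_ne j B with rfl | hjB
      · rw [if_pos rfl, if_pos rfl]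
        rw [add_tsub_cancel_right]
        have h2 : Finsupp.single (0 : Fin (N+2)) A
            = Finsupp.mapDomain Fin.castSucc (Finsupp.single (0 : Fin (N+1)) A) := by
          rw [Finsupp.mapDomain_single]; simp
        rw [h2, hrenim, Nat.add_sub_cancel, hanyc]
        ring
      · rw [if_neg hjB, if_neg hjB]
    rw [Finset.sum_congr rfl hx,
      Finset.sum_ite_eq' (Finset.range (A+B+1)) B fun _ => f A * f B,
      if_pos (Finset.mem_range_succ_iff.mpr (Nat.le_add_left B A))]
  -- specialize to n = m + 2
  obtain ⟨m, rfl⟩ : ∃ m, n = m + 2 := ⟨n - 2, by omega⟩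
  have h1L : (1 : Fin (m+3)) ≠ Fin.last (m+2) := by simp [Fin.ext_iff]
  have h0L : (0 : Fin (m+3)) ≠ Fin.last (m+2) := by simp [Fin.ext_iff]
  have h01 : (0 : Fin (m+3)) ≠ 1 := by simp [Fin.ext_iff]
  -- key: a i = a 0 * f i for i ≤ d
  have key : ∀ i ≤ d, a i = a 0 * f i := by
    intro i hi
    set L : Fin (m+3) := Fin.last (m+2) with hL
    set μ : Fin (m+3) →₀ ℕ := Finsupp.single 1 (d - i) + Finsupp.single L i with hμdef
    have hμL : μ L = i := by simp [hμdef, Finsupp.single_apply, h1L]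
    -- way 1
    have way1 : coeff μ h = a i * f (d - i) := by
      rw [hh, coeff_sum]
      have hx : ∀ j ∈ Finset.range (d + 1),
          coeff μ (C (a j) * X L ^ j * rename Fin.castSucc (F (m+2) (d - j))) =
          if j = i then a i * f (d - i) else 0 := by
        intro j hj
        rw [hterm, hμL]
        rcases eq_or_ne j i with rfl | hji
        · rw [if_pos rfl, if_pos rfl, hμdef, add_tsub_cancel_right]
          have h2 : Finsupp.single (1 : Fin (m+3)) (d - j)
              = Finsupp.mapDomain Fin.castSucc (Finsupp.single (1 : Fin (m+2)) (d - j)) := by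
            rw [Finsupp.mapDomain_single]; simp
          rw [h2, hrenim, hanyc]
        · rw [if_neg hji, if_neg hji]
      rw [Finset.sum_congr rfl hx,
        Finset.sum_ite_eq' (Finset.range (d+1)) i fun _ => a i * f (d - i)]
      rw [if_pos (Finset.mem_range_succ_iff.mpr hi)]
    -- way 2
    have way2 : coeff μ h = a 0 * (f i * f (d - i)) := by
      set σ : Equiv.Perm (Fin (m+3)) := Equiv.swap 0 L with hσdef
      set ν : Fin (m+3) →₀ ℕ := Finsupp.single 1 (d - i) + Finsupp.single 0 i with hνdef
      have hσ1 : σ 1 = 1 := by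
        rw [hσdef, Equiv.swap_apply_of_ne_of_ne h01.symm h1L]
      have hσ0 : σ 0 = L := Equiv.swap_apply_left 0 L
      have hμν : μ = Finsupp.mapDomain σ ν := by
        rw [hνdef, Finsupp.mapDomain_add, Finsupp.mapDomain_single,
          Finsupp.mapDomain_single, hσ1, hσ0]
      have hstep : coeff μ h = coeff ν h := by
        conv_lhs => rw [← hsym σ, hμν]
        exact coeff_rename_mapDomain _ (Equiv.injective σ) h ν
      rw [hstep, hh, coeff_sum]
      have hνL : ν L = 0 := by
        simp [hνdef, Finsupp.single_apply, h1L, h0L]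
      have hx : ∀ j ∈ Finset.range (d + 1),
          coeff ν (C (a j) * X L ^ j * rename Fin.castSucc (F (m+2) (d - j))) =
          if j = 0 then a 0 * (f i * f (d - i)) else 0 := by
        intro j hj
        rw [hterm, hνL]
        rcases eq_or_ne j 0 with rfl | hj0
        · rw [if_pos rfl, if_pos rfl]
          have h1 : ν - Finsupp.single L 0 = ν := by simp
          rw [h1, Nat.sub_zero]
          have h2 : ν = Finsupp.mapDomain Fin.castSucc
              (Finsupp.single (1 : Fin (m+2)) (d - i) + Finsupp.single 0 i) := by
            rw [hνdef, Finsupp.mapDomain_add, Finsupp.mapDomain_single,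
              Finsupp.mapDomain_single]
            simp
          rw [h2, hrenim]
          -- use symmetry of F (m+2) to move variable 1 to the last spot
          set τ : Equiv.Perm (Fin (m+2)) := Equiv.swap 1 (Fin.last (m+1)) with hτdef
          have hτ0 : τ 0 = 0 := by
            rcases eq_or_ne (1 : Fin (m+2)) (Fin.last (m+1)) with he | he
            · rw [hτdef, he, Equiv.swap_self]; rfl
            · rw [hτdef, Equiv.swap_apply_of_ne_of_ne]
              · simp [Fin.ext_iff]
              · simp [Fin.ext_iff]
          have hτl : τ (Fin.last (m+1)) = 1 := Equiv.swap_apply_right 1 (Fin.last (m+1))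
          have h3 : Finsupp.single (1 : Fin (m+2)) (d - i) + Finsupp.single 0 i
              = Finsupp.mapDomain τ
                (Finsupp.single (0 : Fin (m+2)) i + Finsupp.single (Fin.last (m+1)) (d - i)) := by
            rw [Finsupp.mapDomain_add, Finsupp.mapDomain_single, Finsupp.mapDomain_single,
              hτ0, hτl]
            exact add_comm _ _
          rw [h3, ← hFsym (m+2) d τ,
            coeff_rename_mapDomain _ (Equiv.injective τ)]
          have hd : d = i + (d - i) := by omega
          have h4 : F (m+2) d = F (m+2) (i + (d - i)) := by rw [← hd]
          rw [h4, hmix]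
        · rw [if_neg hj0, if_neg hj0]
      rw [Finset.sum_congr rfl hx,
        Finset.sum_ite_eq' (Finset.range (d+1)) 0 fun _ => a 0 * (f i * f (d - i))]
      simp
    have heq := way1.symm.trans way2
    exact mul_right_cancel₀ (hf (d - i)) (heq.trans (by ring))
  -- conclude
  rw [hh, hFrec, Finset.mul_sum]
  apply Finset.sum_congr rfl
  intro i hi
  rw [key i (Finset.mem_range_succ_iff.mp hi), C_mul]
  ring
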